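/- Let (X, δ) be a finite ordinal space with |X| = n ≥ 2 that embeds in ℝ¹, and let Δ(X) be the set of equivalence classes of unordered pairs {x,y} with x ≠ y under the relation δ(x,y) = δ(z,w). Then |Δ(X)| ≥ n − 1. Moreover, if Δ(X) = {δ₁ > δ₂ > … > δ_k}, then |δ₁| = 1 and |δ_i| ≤ i for every i = 2, …, k. -/

import Mathlib

/-- Pick a representative `(x, y)` of an unordered pair with `Φ x ≤ Φ y`. -/
noncomputable def sortPair {X : Type*} (Φ : X → ℝ) (p : Sym2 X) : X × X :=
  if Φ (Quot.out p).1 ≤ Φ (Quot.out p).2 then Quot.out p else (Quot.out p).swap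

lemma sortPair_mk {X : Type*} (Φ : X → ℝ) (p : Sym2 X) :
    Sym2.mk (sortPair Φ p).1 (sortPair Φ p).2 = p := by
  unfold sortPair
  split
  · exact Quot.out_eq p
  · rw [Sym2.eq_swap]; exact Quot.out_eq p

lemma sortPair_le {X : Type*} (Φ : X → ℝ) (p : Sym2 X) :
    Φ (sortPair Φ p).1 ≤ Φ (sortPair Φ p).2 := by
  unfold sortPair
  split
  · assumption
  · exact le_of_not_ge (by assumption)

/-- Proposition: for a finite ordinal space with `n ≥ 2` points embeddable in the real
line, the number of equivalence classes of distinct-point pairs (under equal `δ`-value) is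
at least `n − 1`; the class of the largest value is a singleton, and the class of the
`i`-th largest value contains at most `i` unordered pairs. -/
theorem embeddable_in_R1_class_counts {X L : Type*}
    [LinearOrder L] [OrderBot L] [Fintype X] [DecidableEq X]
    (δ : X → X → L)
    (hsurj : Function.Surjective fun p : X × X => δ p.1 p.2)
    (hsymm : ∀ x y, δ x y = δ y x) (hzero : ∀ x y, δ x y = ⊥ ↔ x = y)
    (n : ℕ) (hn : 2 ≤ n) (hcard : Fintype.card X = n)
    (Φ : X → ℝ)
    (hlt : ∀ x y z w : X, δ x y < δ z w ↔ |Φ x - Φ y| < |Φ z - Φ w|)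
    (heq : ∀ x y z w : X, δ x y = δ z w ↔ |Φ x - Φ y| = |Φ z - Φ w|) :
    (n - 1 ≤ {l : L | ∃ x y : X, x ≠ y ∧ δ x y = l}.ncard) ∧
    (∀ v : L, (∃ x y : X, x ≠ y ∧ δ x y = v) →
      (∀ w : L, (∃ x y : X, x ≠ y ∧ δ x y = w) → w ≤ v) →
      {p : Sym2 X | ¬ p.IsDiag ∧ Sym2.lift ⟨δ, hsymm⟩ p = v}.ncard = 1) ∧
    (∀ v : L, (∃ x y : X, x ≠ y ∧ δ x y = v) →
      {p : Sym2 X | ¬ p.IsDiag ∧ Sym2.lift ⟨δ, hsymm⟩ p = v}.ncard ≤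
        {w : L | (∃ x y : X, x ≠ y ∧ δ x y = w) ∧ v ≤ w}.ncard) := by
  classical
  have hΦinj : Function.Injective Φ := by
    intro x y h
    have h1 : δ x y = δ x x := (heq x y x x).2 (by rw [h])
    have h2 : δ x x = ⊥ := (hzero x x).2 rfl
    exact (hzero x y).1 (h1.trans h2)
  set S : Set L := {l : L | ∃ x y : X, x ≠ y ∧ δ x y = l} with hS
  have hSfin : S.Finite := by
    apply (Set.finite_range fun p : X × X => δ p.1 p.2).subset
    rintro l ⟨x, y, _, rfl⟩
    exact ⟨(x, y), rfl⟩
  have hfinSym : Finite (Sym2 X) := Finite.of_surjective _ (Quot.mk_surjective)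
  -- key claim (third bullet)
  have key : ∀ v : L, (∃ x y : X, x ≠ y ∧ δ x y = v) →
      {p : Sym2 X | ¬ p.IsDiag ∧ Sym2.lift ⟨δ, hsymm⟩ p = v}.ncard ≤
        {w : L | (∃ x y : X, x ≠ y ∧ δ x y = w) ∧ v ≤ w}.ncard := by
    rintro v ⟨x₀, y₀, hxy₀, hv⟩
    set P : Set (Sym2 X) := {p : Sym2 X | ¬ p.IsDiag ∧ Sym2.lift ⟨δ, hsymm⟩ p = v} with hP
    set W : Set L := {w : L | (∃ x y : X, x ≠ y ∧ δ x y = w) ∧ v ≤ w} with hW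
    set d : ℝ := |Φ x₀ - Φ y₀| with hd
    have hd0 : 0 < d := abs_sub_pos.2 (fun h => hxy₀ (hΦinj h))
    have hPfact : ∀ p ∈ P, (sortPair Φ p).1 ≠ (sortPair Φ p).2 ∧
        δ (sortPair Φ p).1 (sortPair Φ p).2 = v ∧
        Φ (sortPair Φ p).2 = Φ (sortPair Φ p).1 + d := by
      rintro p ⟨hpd, hpv⟩
      have hmk := sortPair_mk Φ p
      have hne : (sortPair Φ p).1 ≠ (sortPair Φ p).2 := by
        intro h
        exact hpd (hmk ▸ Sym2.isDiag_iff_proj_eq.2 h)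
      have hδ : δ (sortPair Φ p).1 (sortPair Φ p).2 = v := by
        have h2 : Sym2.lift ⟨δ, hsymm⟩ (Sym2.mk (sortPair Φ p).1 (sortPair Φ p).2) = v := by rw [hmk]; exact hpv
        rwa [Sym2.lift_mk] at h2
      have habs : |Φ (sortPair Φ p).1 - Φ (sortPair Φ p).2| = d :=
        (heq _ _ _ _).1 (hδ.trans hv.symm)
      refine ⟨hne, hδ, ?_⟩
      have hle := sortPair_le Φ p
      rw [abs_sub_comm, abs_of_nonneg (by linarith)] at habs
      linarith
    have hPfin : P.Finite := P.toFinite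
    have hPne : P.Nonempty := by
      refine ⟨s(x₀, y₀), ?_, ?_⟩
      · rw [Sym2.mk_isDiag_iff]; exact hxy₀
      · rw [Sym2.lift_mk]; exact hv
    obtain ⟨pm, hpm, hmax⟩ := Set.exists_max_image P (fun p => Φ (sortPair Φ p).2) hPfin hPne
    set w : X := (sortPair Φ pm).2 with hwdef
    obtain ⟨-, -, hpmb⟩ := hPfact pm hpm
    set f : Sym2 X → L := fun p => δ (sortPair Φ p).1 w with hf
    have hgap : ∀ p ∈ P, Φ w - Φ (sortPair Φ p).1 ≥ d := by
      intro p hp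
      obtain ⟨-, -, hpb⟩ := hPfact p hp
      have := hmax p hp
      linarith
    have hsub : f '' P ⊆ W := by
      rintro l ⟨p, hp, rfl⟩
      have hg := hgap p hp
      have hxw : (sortPair Φ p).1 ≠ w := by
        intro h; rw [h] at hg; simp at hg; linarith
      refine ⟨⟨_, _, hxw, rfl⟩, ?_⟩
      rw [← hv]
      refine not_lt.1 fun hc => ?_
      rw [hlt] at hc
      rw [abs_sub_comm, abs_of_nonneg (by linarith)] at hc
      rw [← hd] at hc
      linarith
    have hinj : Set.InjOn f P := by
      intro p hp q hq hfe
      obtain ⟨-, hpv, hpb⟩ := hPfact p hp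
      obtain ⟨-, hqv, hqb⟩ := hPfact q hq
      have h1 : |Φ (sortPair Φ p).1 - Φ w| = |Φ (sortPair Φ q).1 - Φ w| := (heq _ _ _ _).1 hfe
      have hg1 := hgap p hp
      have hg2 := hgap q hq
      rw [abs_sub_comm, abs_of_nonneg (by linarith), abs_sub_comm (Φ (sortPair Φ q).1),
        abs_of_nonneg (by linarith)] at h1
      have hx : (sortPair Φ p).1 = (sortPair Φ q).1 := hΦinj (by linarith)
      have hy : (sortPair Φ p).2 = (sortPair Φ q).2 := by
        apply hΦinj; rw [hpb, hqb, hx]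
      rw [← sortPair_mk Φ p, ← sortPair_mk Φ q, hx, hy]
    calc P.ncard = (f '' P).ncard := (Set.ncard_image_of_injOn hinj).symm
      _ ≤ W.ncard := Set.ncard_le_ncard hsub (hSfin.subset fun l hl => hl.1)
  refine ⟨?_, ?_, key⟩
  · -- at least n - 1 values
    have hne : (Set.univ : Set X).Nonempty := by
      have : 0 < Fintype.card X := by omega
      rw [Fintype.card_pos_iff] at this
      exact Set.univ_nonempty
    obtain ⟨m, -, hm⟩ := Set.exists_min_image Set.univ Φ Set.finite_univ hne
    have hinj : Set.InjOn (fun x => δ m x) (Set.univ \ {m}) := by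
      rintro x ⟨-, hx⟩ y ⟨-, hy⟩ he
      have h1 : |Φ m - Φ x| = |Φ m - Φ y| := (heq _ _ _ _).1 he
      have hmx := hm x (Set.mem_univ x)
      have hmy := hm y (Set.mem_univ y)
      rw [abs_sub_comm, abs_of_nonneg (by linarith), abs_sub_comm,
        abs_of_nonneg (by linarith)] at h1
      exact hΦinj (by linarith)
    have hsub : (fun x => δ m x) '' (Set.univ \ {m}) ⊆ S := by
      rintro l ⟨x, ⟨-, hx⟩, rfl⟩
      exact ⟨m, x, fun h => hx (Set.mem_singleton_iff.2 h.symm), rfl⟩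
    have hc : (Set.univ \ {m} : Set X).ncard = n - 1 := by
      rw [Set.ncard_diff_singleton_of_mem (Set.mem_univ m), Set.ncard_univ,
        Nat.card_eq_fintype_card, hcard]
    calc n - 1 = (Set.univ \ {m} : Set X).ncard := hc.symm
      _ = ((fun x => δ m x) '' (Set.univ \ {m})).ncard := (Set.ncard_image_of_injOn hinj).symm
      _ ≤ S.ncard := Set.ncard_le_ncard hsub hSfin
  · -- largest class is a singleton
    intro v hv hmax
    have h1 := key v hv
    have hW : {w : L | (∃ x y : X, x ≠ y ∧ δ x y = w) ∧ v ≤ w} = {v} := by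
      ext w
      constructor
      · rintro ⟨hw, hvw⟩
        exact le_antisymm (hmax w hw) hvw
      · rintro rfl
        exact ⟨hv, le_rfl⟩
    rw [hW, Set.ncard_singleton] at h1
    have hfinSym2 : Finite (Sym2 X) := Finite.of_surjective _ (Quot.mk_surjective)
    have h2 : 0 < {p : Sym2 X | ¬ p.IsDiag ∧ Sym2.lift ⟨δ, hsymm⟩ p = v}.ncard := by
      rw [Set.ncard_pos (Set.toFinite _)]
      obtain ⟨x₀, y₀, hxy₀, hveq⟩ := hv
      refine ⟨s(x₀, y₀), ?_, ?_⟩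
      · rw [Sym2.mk_isDiag_iff]; exact hxy₀
      · rw [Sym2.lift_mk]; exact hveq
    omega
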